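/- Let G be a finite simple graph, let σ and σ' be finite edge sequences such that σ' is obtained from σ by deleting one edge, and let M and M' be the greedy matchings computed on σ and σ'. Then the symmetric difference M △ M' is a union of vertex-disjoint alternating paths and cycles containing at most one path of non-zero length, and that path (if it exists) contains the deleted edge. -/

import Mathlib

open Classical in
/-- The greedy maximal-matching algorithm: process edges in order, adding an
edge iff it is not a loop and both its endpoints are currently unmatched. -/
noncomputable def greedyMatching {V : Type*} (σ : List (Sym2 V)) : Finset (Sym2 V) :=
  σ.foldl (fun M e =>
    if ¬ e.IsDiag ∧ ∀ f ∈ M, ∀ v, v ∈ e → v ∉ f then insert e M else M) ∅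

namespace GreedyAux

open Classical

variable {V : Type*}

/-- The condition under which greedy adds edge `f` to matching `M`. -/
def cond (M : Finset (Sym2 V)) (f : Sym2 V) : Prop :=
  ¬ f.IsDiag ∧ ∀ g ∈ M, ∀ v, v ∈ f → v ∉ g

open Classical in
noncomputable def step (M : Finset (Sym2 V)) (f : Sym2 V) : Finset (Sym2 V) :=
  if cond M f then insert f M else M

lemma step_eq : (fun (M : Finset (Sym2 V)) (e : Sym2 V) =>
    if ¬ e.IsDiag ∧ ∀ f ∈ M, ∀ v, v ∈ e → v ∉ f then insert e M else M) = step := by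
  funext M e
  unfold step cond
  congr

lemma greedy_eq (σ : List (Sym2 V)) : greedyMatching σ = σ.foldl step ∅ := by
  unfold greedyMatching
  rw [step_eq]

lemma step_pos {M : Finset (Sym2 V)} {f : Sym2 V} (h : cond M f) :
    step M f = insert f M := if_pos h

lemma step_neg {M : Finset (Sym2 V)} {f : Sym2 V} (h : ¬ cond M f) :
    step M f = M := if_neg h

def Matching (M : Finset (Sym2 V)) : Prop :=
  (∀ f ∈ M, ¬ f.IsDiag) ∧ ∀ f ∈ M, ∀ g ∈ M, f ≠ g → ∀ v, v ∈ f → v ∉ g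

def matched (M : Finset (Sym2 V)) (v : V) : Prop := ∃ f ∈ M, v ∈ f

lemma matched_insert {M : Finset (Sym2 V)} {f : Sym2 V} {v : V} :
    matched (insert f M) v ↔ v ∈ f ∨ matched M v := by
  constructor
  · rintro ⟨g, hg, hv⟩
    rcases Finset.mem_insert.mp hg with rfl | hg
    · exact Or.inl hv
    · exact Or.inr ⟨g, hg, hv⟩
  · rintro (hv | ⟨g, hg, hv⟩)
    · exact ⟨f, Finset.mem_insert_self _ _, hv⟩
    · exact ⟨g, Finset.mem_insert_of_mem hg, hv⟩

lemma cond_iff {M : Finset (Sym2 V)} {f : Sym2 V} :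
    cond M f ↔ ¬ f.IsDiag ∧ ∀ v ∈ f, ¬ matched M v := by
  unfold cond matched
  refine and_congr_right fun _ => ?_
  constructor
  · rintro h v hv ⟨g, hg, hvg⟩; exact h g hg v hv hvg
  · intro h g hg v hv hvg; exact h v hv ⟨g, hg, hvg⟩

lemma not_mem_of_cond {M : Finset (Sym2 V)} : ∀ {f : Sym2 V}, cond M f → f ∉ M := by
  intro f
  induction f using Sym2.ind with
  | _ a b => exact fun h hf => h.2 _ hf a (Sym2.mem_mk_left a b) (Sym2.mem_mk_left a b)

lemma matching_insert {M : Finset (Sym2 V)} {f : Sym2 V} (hM : Matching M) (h : cond M f) :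
    Matching (insert f M) := by
  constructor
  · intro g hg
    rcases Finset.mem_insert.mp hg with rfl | hg
    · exact h.1
    · exact hM.1 g hg
  · intro g hg g' hg' hne v hv hv'
    rcases Finset.mem_insert.mp hg with hgf | hgM
    · rcases Finset.mem_insert.mp hg' with hgf' | hgM'
      · exact hne (hgf.trans hgf'.symm)
      · exact h.2 g' hgM' v (hgf ▸ hv) hv'
    · rcases Finset.mem_insert.mp hg' with hgf' | hgM'
      · exact h.2 g hgM v (hgf' ▸ hv') hv
      · exact hM.2 g hgM g' hgM' hne v hv hv' 

lemma matching_empty : Matching (∅ : Finset (Sym2 V)) := ⟨by simp, by simp⟩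

lemma matching_step {M : Finset (Sym2 V)} {f : Sym2 V} (hM : Matching M) :
    Matching (step M f) := by
  by_cases h : cond M f
  · rw [step_pos h]; exact matching_insert hM h
  · rw [step_neg h]; exact hM

lemma matching_foldl (σ : List (Sym2 V)) : ∀ M : Finset (Sym2 V),
    Matching M → Matching (σ.foldl step M) := by
  induction σ with
  | nil => exact fun M h => h
  | cons f σ ih => exact fun M h => ih _ (matching_step h)

noncomputable def symD (M M' : Finset (Sym2 V)) : Finset (Sym2 V) := (M \ M') ∪ (M' \ M)

noncomputable def HG (M M' : Finset (Sym2 V)) : SimpleGraph V :=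
  SimpleGraph.fromEdgeSet ((symD M M' : Finset (Sym2 V)) : Set (Sym2 V))

lemma mem_symD {M M' : Finset (Sym2 V)} {g : Sym2 V} :
    g ∈ symD M M' ↔ (g ∈ M ∧ g ∉ M') ∨ (g ∈ M' ∧ g ∉ M) := by
  simp [symD, Finset.mem_union, Finset.mem_sdiff]

lemma symD_insert_both {M M' : Finset (Sym2 V)} {f : Sym2 V} (hf : f ∉ M) (hf' : f ∉ M') :
    symD (insert f M) (insert f M') = symD M M' := by
  ext g
  by_cases hg : g = f
  · subst hg; simp [mem_symD, hf, hf']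
  · simp [mem_symD, Finset.mem_insert, hg]

lemma symD_insert_left {M M' : Finset (Sym2 V)} {f : Sym2 V} (hf : f ∉ M) (hf' : f ∉ M') :
    symD (insert f M) M' = insert f (symD M M') := by
  ext g
  by_cases hg : g = f
  · subst hg; simp [mem_symD, hf, hf']
  · simp [mem_symD, Finset.mem_insert, hg]

lemma symD_insert_right {M M' : Finset (Sym2 V)} {f : Sym2 V} (hf : f ∉ M) (hf' : f ∉ M') :
    symD M (insert f M') = insert f (symD M M') := by
  ext g
  by_cases hg : g = f
  · subst hg; simp [mem_symD, hf, hf']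
  · simp [mem_symD, Finset.mem_insert, hg]

lemma HG_adj {M M' : Finset (Sym2 V)} {v w : V} :
    (HG M M').Adj v w ↔ s(v, w) ∈ symD M M' ∧ v ≠ w := by
  simp [HG, SimpleGraph.fromEdgeSet_adj]

def diff (M M' : Finset (Sym2 V)) (v : V) : Prop := ¬ (matched M v ↔ matched M' v)

def Inv (e : Sym2 V) (M M' : Finset (Sym2 V)) : Prop :=
  Matching M ∧ Matching M' ∧
  ((∀ v, matched M v ↔ matched M' v) ∨
   (e ∈ M ∧ e ∉ M' ∧ ∃ x y : V, x ≠ y ∧ diff M M' x ∧ diff M M' y ∧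
     (∀ v, diff M M' v → v = x ∨ v = y) ∧
     (HG M M').Reachable x y ∧ ∀ w ∈ e, (HG M M').Reachable x w))

lemma focus {e : Sym2 V} {M M' : Finset (Sym2 V)} {x y u : V}
    (hxy : x ≠ y) (hdx : diff M M' x) (hdy : diff M M' y)
    (huni : ∀ v, diff M M' v → v = x ∨ v = y)
    (hr : (HG M M').Reachable x y) (hre : ∀ w ∈ e, (HG M M').Reachable x w)
    (hu : diff M M' u) :
    ∃ z, u ≠ z ∧ diff M M' z ∧ (∀ v, diff M M' v → v = u ∨ v = z) ∧
      (HG M M').Reachable u z ∧ ∀ w ∈ e, (HG M M').Reachable u w := by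
  rcases huni u hu with rfl | rfl
  · exact ⟨y, hxy, hdy, huni, hr, hre⟩
  · exact ⟨x, hxy.symm, hdx, fun v hv => (huni v hv).symm, hr.symm,
      fun w hw => hr.symm.trans (hre w hw)⟩

lemma step_inv (e f : Sym2 V) {M M' : Finset (Sym2 V)} (h : Inv e M M') :
    Inv e (step M f) (step M' f) := by
  obtain ⟨hM, hM', hbr⟩ := h
  refine ⟨matching_step hM, matching_step hM', ?_⟩
  by_cases cM : cond M f <;> by_cases cM' : cond M' f
  · -- both add f
    rw [step_pos cM, step_pos cM']
    have hfM := not_mem_of_cond cM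
    have hfM' := not_mem_of_cond cM'
    have hfree : ∀ v ∈ f, ¬ matched M v := (cond_iff.mp cM).2
    have hfree' : ∀ v ∈ f, ¬ matched M' v := (cond_iff.mp cM').2
    have hdiff : ∀ v, diff (insert f M) (insert f M') v ↔ diff M M' v := by
      intro v
      unfold diff
      rw [matched_insert, matched_insert]
      by_cases hv : v ∈ f
      · simp [hv, hfree v hv, hfree' v hv]
      · simp [hv]
    rcases hbr with heq | ⟨heM, heM', x, y, hxy, hdx, hdy, huni, hr, hre⟩
    · left; intro v; rw [matched_insert, matched_insert]
      constructor
      · rintro (hv | hv)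
        · exact Or.inl hv
        · exact Or.inr ((heq v).mp hv)
      · rintro (hv | hv)
        · exact Or.inl hv
        · exact Or.inr ((heq v).mpr hv)
    · right
      have hHG : HG (insert f M) (insert f M') = HG M M' := by
        unfold HG; rw [symD_insert_both hfM hfM']
      have heM2 : e ∉ insert f M' := by
        intro he'
        rcases Finset.mem_insert.mp he' with rfl | he'
        · exact hfM heM
        · exact heM' he'
      exact ⟨Finset.mem_insert_of_mem heM, heM2, x, y, hxy, (hdiff x).mpr hdx,
        (hdiff y).mpr hdy, fun v hv => huni v ((hdiff v).mp hv),
        by rw [hHG]; exact hr, by rw [hHG]; exact hre⟩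
  · -- M adds f, M' rejects
    rw [step_pos cM, step_neg cM']
    have hfM := not_mem_of_cond cM
    have hnd : ¬ f.IsDiag := cM.1
    have hfree : ∀ v ∈ f, ¬ matched M v := (cond_iff.mp cM).2
    have hex : ∃ v ∈ f, matched M' v := by
      by_contra hcon
      push_neg at hcon
      exact cM' (cond_iff.mpr ⟨hnd, fun v hv => hcon v hv⟩)
    obtain ⟨u, huf, humat'⟩ := hex
    have hdu : diff M M' u := by
      unfold diff; simp [hfree u huf, humat']
    rcases hbr with heq | ⟨heM, heM', x, y, hxy, hdx, hdy, huni, hr, hre⟩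
    · exact absurd (heq u) hdu
    obtain ⟨y₀, huy, hdy₀, huni₀, hru, hrue⟩ :=
      focus hxy hdx hdy huni hr hre hdu
    have hfw : s(u, Sym2.Mem.other huf) = f := Sym2.other_spec huf
    set w := Sym2.Mem.other huf with hwdef
    have hwu : w ≠ u := Sym2.other_ne hnd huf
    have hwf : w ∈ f := by rw [← hfw]; exact Sym2.mem_mk_right u w
    have hmemf : ∀ v, v ∈ f ↔ v = u ∨ v = w := by
      intro v; rw [← hfw]; exact Sym2.mem_iff
    by_cases hw' : matched M' w
    · -- collapse to equal matched sets
      have hdw : diff M M' w := by unfold diff; simp [hfree w hwf, hw']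
      have hwy : w = y₀ := by
        rcases huni₀ w hdw with h1 | h1
        · exact absurd h1.symm hwu.symm
        · exact h1
      left
      intro v
      rw [matched_insert]
      by_cases hvf : v ∈ f
      · rcases (hmemf v).mp hvf with rfl | rfl
        · simp [hvf, humat']
        · simp [hvf, hw']
      · have hnd2 : ¬ diff M M' v := by
          intro hd
          rcases huni₀ v hd with rfl | rfl
          · exact hvf huf
          · exact hvf (hwy ▸ hwf)
        have hiff : matched M v ↔ matched M' v := not_not.mp hnd2
        simp [hvf, hiff]
    · -- path extends at u, new endpoint w
      right
      have hfM' : f ∉ M' := fun hfin => hw' ⟨f, hfin, hwf⟩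
      have hwny : w ≠ y₀ := by
        intro hcon
        apply hdy₀
        rw [← hcon]
        exact Iff.intro (fun h => absurd h (hfree w hwf)) (fun h => absurd h hw')
      have hDnew : symD (insert f M) M' = insert f (symD M M') :=
        symD_insert_left hfM hfM'
      have hle : HG M M' ≤ HG (insert f M) M' := by
        unfold HG
        apply SimpleGraph.fromEdgeSet_mono
        rw [hDnew]
        exact_mod_cast Finset.subset_insert f _
      have hadj : (HG (insert f M) M').Adj w u := by
        rw [HG_adj]
        refine ⟨?_, hwu⟩
        rw [hDnew]
        have hsw : s(w, u) = f := by rw [Sym2.eq_swap]; exact hfw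
        rw [hsw]; exact Finset.mem_insert_self _ _
      have heM2 : e ∉ M' := heM'
      refine ⟨Finset.mem_insert_of_mem heM, heM2, w, y₀, hwny, ?_, ?_, ?_, ?_, ?_⟩
      · -- diff w
        unfold diff
        rw [matched_insert]
        simp [hwf, hw']
      · -- diff y₀
        unfold diff
        rw [matched_insert]
        have hy₀f : y₀ ∉ f := by
          rw [hmemf]
          push_neg
          exact ⟨fun hcon => huy hcon.symm, fun hcon => hwny hcon.symm⟩
        simpa [hy₀f, diff] using hdy₀
      · -- uniqueness
        intro v hv
        by_cases hvf : v ∈ f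
        · rcases (hmemf v).mp hvf with rfl | rfl
          · exfalso
            apply hv
            rw [matched_insert]
            simp [huf, humat']
          · exact Or.inl rfl
        · have hdv : diff M M' v := by
            unfold diff at hv ⊢
            rwa [matched_insert, or_iff_right_iff_imp.mpr (fun h => absurd h hvf) ] at hv
          rcases huni₀ v hdv with rfl | rfl
          · exact absurd huf hvf
          · exact Or.inr rfl
      · exact hadj.reachable.trans (hru.mono hle)
      · exact fun z hz => hadj.reachable.trans ((hrue z hz).mono hle)
  · -- M rejects f, M' adds f
    rw [step_neg cM, step_pos cM']
    have hfM' := not_mem_of_cond cM'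
    have hnd : ¬ f.IsDiag := cM'.1
    have hfree' : ∀ v ∈ f, ¬ matched M' v := (cond_iff.mp cM').2
    have hex : ∃ v ∈ f, matched M v := by
      by_contra hcon
      push_neg at hcon
      exact cM (cond_iff.mpr ⟨hnd, fun v hv => hcon v hv⟩)
    obtain ⟨u, huf, humat⟩ := hex
    have hdu : diff M M' u := by
      unfold diff; simp [hfree' u huf, humat]
    rcases hbr with heq | ⟨heM, heM', x, y, hxy, hdx, hdy, huni, hr, hre⟩
    · exact absurd (heq u) hdu
    obtain ⟨y₀, huy, hdy₀, huni₀, hru, hrue⟩ :=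
      focus hxy hdx hdy huni hr hre hdu
    have hfw : s(u, Sym2.Mem.other huf) = f := Sym2.other_spec huf
    set w := Sym2.Mem.other huf with hwdef
    have hwu : w ≠ u := Sym2.other_ne hnd huf
    have hwf : w ∈ f := by rw [← hfw]; exact Sym2.mem_mk_right u w
    have hmemf : ∀ v, v ∈ f ↔ v = u ∨ v = w := by
      intro v; rw [← hfw]; exact Sym2.mem_iff
    by_cases hw' : matched M w
    · -- collapse to equal matched sets
      have hdw : diff M M' w := by unfold diff; simp [hfree' w hwf, hw']
      have hwy : w = y₀ := by
        rcases huni₀ w hdw with h1 | h1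
        · exact absurd h1.symm hwu.symm
        · exact h1
      left
      intro v
      rw [matched_insert]
      by_cases hvf : v ∈ f
      · rcases (hmemf v).mp hvf with rfl | rfl
        · simp [hvf, humat]
        · simp [hvf, hw']
      · have hnd2 : ¬ diff M M' v := by
          intro hd
          rcases huni₀ v hd with rfl | rfl
          · exact hvf huf
          · exact hvf (hwy ▸ hwf)
        have hiff : matched M v ↔ matched M' v := not_not.mp hnd2
        simp [hvf, hiff]
    · -- path extends at u, new endpoint w
      right
      have hfM : f ∉ M := fun hfin => hw' ⟨f, hfin, hwf⟩
      have hwny : w ≠ y₀ := by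
        intro hcon
        apply hdy₀
        rw [← hcon]
        exact Iff.intro (fun h => absurd h hw') (fun h => absurd h (hfree' w hwf))
      have hDnew : symD M (insert f M') = insert f (symD M M') :=
        symD_insert_right hfM hfM'
      have hle : HG M M' ≤ HG M (insert f M') := by
        unfold HG
        apply SimpleGraph.fromEdgeSet_mono
        rw [hDnew]
        exact_mod_cast Finset.subset_insert f _
      have hadj : (HG M (insert f M')).Adj w u := by
        rw [HG_adj]
        refine ⟨?_, hwu⟩
        rw [hDnew]
        have hsw : s(w, u) = f := by rw [Sym2.eq_swap]; exact hfw
        rw [hsw]; exact Finset.mem_insert_self _ _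
      have heM2 : e ∉ insert f M' := by
        intro hcon
        rcases Finset.mem_insert.mp hcon with rfl | hcon
        · exact hfM heM
        · exact heM' hcon
      refine ⟨heM, heM2, w, y₀, hwny, ?_, ?_, ?_, ?_, ?_⟩
      · -- diff w
        unfold diff
        rw [matched_insert]
        simp [hwf, hw']
      · -- diff y₀
        unfold diff
        rw [matched_insert]
        have hy₀f : y₀ ∉ f := by
          rw [hmemf]
          push_neg
          exact ⟨fun hcon => huy hcon.symm, fun hcon => hwny hcon.symm⟩
        simpa [hy₀f, diff] using hdy₀
      · -- uniqueness
        intro v hv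
        by_cases hvf : v ∈ f
        · rcases (hmemf v).mp hvf with rfl | rfl
          · exfalso
            apply hv
            rw [matched_insert]
            simp [huf, humat]
          · exact Or.inl rfl
        · have hdv : diff M M' v := by
            unfold diff at hv ⊢
            rwa [matched_insert, or_iff_right_iff_imp.mpr (fun h => absurd h hvf)] at hv
          rcases huni₀ v hdv with rfl | rfl
          · exact absurd huf hvf
          · exact Or.inr rfl
      · exact hadj.reachable.trans (hru.mono hle)
      · exact fun z hz => hadj.reachable.trans ((hrue z hz).mono hle)
  · -- neither adds
    rw [step_neg cM, step_neg cM']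
    exact hbr

lemma foldl_inv (e : Sym2 V) (σ : List (Sym2 V)) : ∀ M M' : Finset (Sym2 V),
    Inv e M M' → Inv e (σ.foldl step M) (σ.foldl step M') := by
  induction σ with
  | nil => exact fun M M' h => h
  | cons f σ ih => exact fun M M' h => ih _ _ (step_inv e f h)

lemma init_inv : ∀ (e : Sym2 V) (M₀ : Finset (Sym2 V)), Matching M₀ →
    Inv e (step M₀ e) M₀ := by
  intro e
  induction e using Sym2.ind with
  | _ a b =>
    intro M₀ h
    by_cases hc : cond M₀ s(a, b)
    · rw [step_pos hc]
      refine ⟨matching_insert h hc, h,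
        Or.inr ⟨Finset.mem_insert_self _ _, not_mem_of_cond hc, a, b, ?_, ?_, ?_, ?_, ?_, ?_⟩⟩
      · exact fun hh => hc.1 (Sym2.mk_isDiag_iff.mpr hh)
      · intro hiff
        exact (cond_iff.mp hc).2 a (Sym2.mem_mk_left a b)
          (hiff.mp ⟨_, Finset.mem_insert_self _ _, Sym2.mem_mk_left a b⟩)
      · intro hiff
        exact (cond_iff.mp hc).2 b (Sym2.mem_mk_right a b)
          (hiff.mp ⟨_, Finset.mem_insert_self _ _, Sym2.mem_mk_right a b⟩)
      · intro v hv
        by_contra hcon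
        push_neg at hcon
        apply hv
        have hvnot : v ∉ s(a, b) := by
          rw [Sym2.mem_iff]
          push_neg
          exact hcon
        rw [matched_insert]
        simp [hvnot]
      · refine SimpleGraph.Adj.reachable ?_
        rw [HG_adj]
        exact ⟨mem_symD.mpr (Or.inl ⟨Finset.mem_insert_self _ _, not_mem_of_cond hc⟩),
          fun hh => hc.1 (Sym2.mk_isDiag_iff.mpr hh)⟩
      · intro w hw
        rcases Sym2.mem_iff.mp hw with rfl | rfl
        · exact SimpleGraph.Reachable.refl _
        · refine SimpleGraph.Adj.reachable ?_
          rw [HG_adj]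
          exact ⟨mem_symD.mpr (Or.inl ⟨Finset.mem_insert_self _ _, not_mem_of_cond hc⟩),
            fun hh => hc.1 (Sym2.mk_isDiag_iff.mpr hh)⟩
    · rw [step_neg hc]
      exact ⟨h, h, Or.inl fun v => Iff.rfl⟩

lemma matched_unique {M : Finset (Sym2 V)} (hM : Matching M) {v w₁ w₂ : V}
    (h1 : s(v, w₁) ∈ M) (h2 : s(v, w₂) ∈ M) (hw1 : w₁ ≠ v) (hw2 : w₂ ≠ v) : w₁ = w₂ := by
  by_cases he : s(v, w₁) = s(v, w₂)
  · rcases Sym2.eq_iff.mp he with ⟨-, hh⟩ | ⟨hh, hh'⟩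
    · exact hh
    · exact absurd hh' hw1
  · exact absurd (Sym2.mem_mk_left v w₂) (hM.2 _ h1 _ h2 he v (Sym2.mem_mk_left v w₁))

lemma nb_subsingleton {M : Finset (Sym2 V)} (hM : Matching M) (v : V) :
    {w | s(v, w) ∈ M ∧ w ≠ v}.Subsingleton := by
  intro w1 h1 w2 h2
  exact matched_unique hM h1.1 h2.1 h1.2 h2.2

lemma deg_le_two {M M' : Finset (Sym2 V)} (hM : Matching M) (hM' : Matching M') (v : V) :
    {w | (HG M M').Adj v w}.ncard ≤ 2 := by
  have hsub : {w | (HG M M').Adj v w} ⊆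
      {w | s(v, w) ∈ M ∧ w ≠ v} ∪ {w | s(v, w) ∈ M' ∧ w ≠ v} := by
    intro w hw
    rw [Set.mem_setOf_eq, HG_adj] at hw
    rcases mem_symD.mp hw.1 with hh | hh
    · exact Or.inl ⟨hh.1, fun hcon => hw.2 hcon.symm⟩
    · exact Or.inr ⟨hh.1, fun hcon => hw.2 hcon.symm⟩
  have f1 := nb_subsingleton hM v
  have f2 := nb_subsingleton hM' v
  have c1 : {w | s(v, w) ∈ M ∧ w ≠ v}.ncard ≤ 1 := by
    rcases f1.eq_empty_or_singleton with hh | ⟨x, hh⟩ <;> simp [hh]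
  have c2 : {w | s(v, w) ∈ M' ∧ w ≠ v}.ncard ≤ 1 := by
    rcases f2.eq_empty_or_singleton with hh | ⟨x, hh⟩ <;> simp [hh]
  calc {w | (HG M M').Adj v w}.ncard
      ≤ ({w | s(v, w) ∈ M ∧ w ≠ v} ∪ {w | s(v, w) ∈ M' ∧ w ≠ v}).ncard :=
        Set.ncard_le_ncard hsub (f1.finite.union f2.finite)
    _ ≤ {w | s(v, w) ∈ M ∧ w ≠ v}.ncard + {w | s(v, w) ∈ M' ∧ w ≠ v}.ncard :=
        Set.ncard_union_le _ _
    _ ≤ 2 := by omega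

lemma deg_one_diff {M M' : Finset (Sym2 V)} (hM : Matching M) (hM' : Matching M') {v : V}
    (h : {w | (HG M M').Adj v w}.ncard = 1) : diff M M' v := by
  obtain ⟨w, hw⟩ := Set.ncard_eq_one.mp h
  have hadj : (HG M M').Adj v w := by
    have hmem : w ∈ ({w} : Set V) := rfl
    rw [← hw] at hmem
    exact hmem
  have huniq : ∀ z, (HG M M').Adj v z → z = w := by
    intro z hz
    have : z ∈ ({w} : Set V) := by rw [← hw]; exact hz
    exact this
  rcases mem_symD.mp (HG_adj.mp hadj).1 with ⟨h1, h2⟩ | ⟨h1, h2⟩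
  · -- s(v,w) ∈ M \ M'
    have hmat : matched M v := ⟨_, h1, Sym2.mem_mk_left v w⟩
    have hnmat : ¬ matched M' v := by
      rintro ⟨g, hg, hvg⟩
      have hndg : ¬ g.IsDiag := hM'.1 g hg
      have hspec : s(v, Sym2.Mem.other hvg) = g := Sym2.other_spec hvg
      have hne : Sym2.Mem.other hvg ≠ v := Sym2.other_ne hndg hvg
      by_cases hgM : g ∈ M
      · by_cases hge : g = s(v, w)
        · rw [hge] at hg; exact h2 hg
        · exact hM.2 g hgM _ h1 hge v hvg (Sym2.mem_mk_left v w)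
      · have hadj' : (HG M M').Adj v (Sym2.Mem.other hvg) := by
          rw [HG_adj, hspec]
          exact ⟨mem_symD.mpr (Or.inr ⟨hg, hgM⟩), hne.symm⟩
        have hew := huniq _ hadj'
        rw [hew] at hspec
        rw [hspec] at h2
        exact h2 hg
    exact fun hiff => hnmat (hiff.mp hmat)
  · -- s(v,w) ∈ M' \ M
    have hmat : matched M' v := ⟨_, h1, Sym2.mem_mk_left v w⟩
    have hnmat : ¬ matched M v := by
      rintro ⟨g, hg, hvg⟩
      have hndg : ¬ g.IsDiag := hM.1 g hg
      have hspec : s(v, Sym2.Mem.other hvg) = g := Sym2.other_spec hvg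
      have hne : Sym2.Mem.other hvg ≠ v := Sym2.other_ne hndg hvg
      by_cases hgM : g ∈ M'
      · by_cases hge : g = s(v, w)
        · rw [hge] at hg; exact h2 hg
        · exact hM'.2 g hgM _ h1 hge v hvg (Sym2.mem_mk_left v w)
      · have hadj' : (HG M M').Adj v (Sym2.Mem.other hvg) := by
          rw [HG_adj, hspec]
          exact ⟨mem_symD.mpr (Or.inl ⟨hg, hgM⟩), hne.symm⟩
        have hew := huniq _ hadj'
        rw [hew] at hspec
        rw [hspec] at h2
        exact h2 hg
    exact fun hiff => hnmat (hiff.mpr hmat)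

lemma conclusions {e : Sym2 V} {M M' : Finset (Sym2 V)} (h : Inv e M M') :
    (∀ v, {w | (HG M M').Adj v w}.ncard ≤ 2) ∧
    (∀ u v, {w | (HG M M').Adj u w}.ncard = 1 → {w | (HG M M').Adj v w}.ncard = 1 →
      (HG M M').Reachable u v) ∧
    (∀ u, {w | (HG M M').Adj u w}.ncard = 1 →
      e ∈ symD M M' ∧ ∀ w ∈ e, (HG M M').Reachable u w) := by
  obtain ⟨hM, hM', hbr⟩ := h
  refine ⟨fun v => deg_le_two hM hM' v, ?_, ?_⟩
  · intro u v hu hv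
    have hdu := deg_one_diff hM hM' hu
    have hdv := deg_one_diff hM hM' hv
    rcases hbr with heq | ⟨heM, heM', x, y, hxy, hdx, hdy, huni, hr, hre⟩
    · exact absurd (heq u) hdu
    · rcases huni u hdu with rfl | rfl <;> rcases huni v hdv with rfl | rfl
      · exact SimpleGraph.Reachable.refl _
      · exact hr
      · exact hr.symm
      · exact SimpleGraph.Reachable.refl _
  · intro u hu
    have hdu := deg_one_diff hM hM' hu
    rcases hbr with heq | ⟨heM, heM', x, y, hxy, hdx, hdy, huni, hr, hre⟩
    · exact absurd (heq u) hdu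
    · refine ⟨mem_symD.mpr (Or.inl ⟨heM, heM'⟩), ?_⟩
      rcases huni u hdu with rfl | rfl
      · exact hre
      · exact fun w hw => hr.symm.trans (hre w hw)

end GreedyAux

/-- Structure of the symmetric difference of greedy matchings on streams
differing in one edge: every vertex has degree at most 2 (so the symmetric
difference is a vertex-disjoint union of alternating paths and cycles), all
degree-one vertices lie in a single connected component (at most one path of
non-zero length), and any path of non-zero length contains the deleted edge. -/
theorem greedy_symmdiff_structure {V : Type*} [DecidableEq V] (G : SimpleGraph V)
    (σ₁ σ₂ : List (Sym2 V)) (e : Sym2 V)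
    (hG : ∀ x ∈ σ₁ ++ e :: σ₂, x ∈ G.edgeSet)
    (M M' : Finset (Sym2 V))
    (hM : M = greedyMatching (σ₁ ++ e :: σ₂))
    (hM' : M' = greedyMatching (σ₁ ++ σ₂))
    (H : SimpleGraph V)
    (hH : H = SimpleGraph.fromEdgeSet (((M \ M') ∪ (M' \ M) : Finset (Sym2 V)) : Set (Sym2 V))) :
    (∀ v : V, {w | H.Adj v w}.ncard ≤ 2) ∧
    (∀ u v : V, {w | H.Adj u w}.ncard = 1 → {w | H.Adj v w}.ncard = 1 →
      H.Reachable u v) ∧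
    (∀ u : V, {w | H.Adj u w}.ncard = 1 →
      e ∈ (M \ M') ∪ (M' \ M) ∧ ∀ w, w ∈ e → H.Reachable u w) := by
  have hinv : GreedyAux.Inv e M M' := by
    rw [hM, hM', GreedyAux.greedy_eq, GreedyAux.greedy_eq, List.foldl_append,
      List.foldl_append, List.foldl_cons]
    exact GreedyAux.foldl_inv e σ₂ _ _
      (GreedyAux.init_inv e _ (GreedyAux.matching_foldl σ₁ ∅ GreedyAux.matching_empty))
  have hsd : ((M \ M') ∪ (M' \ M) : Finset (Sym2 V)) = GreedyAux.symD M M' := by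
    ext g
    simp [GreedyAux.symD, Finset.mem_union, Finset.mem_sdiff]
  have hHeq : H = GreedyAux.HG M M' := by
    rw [hH, hsd]; rfl
  obtain ⟨c1, c2, c3⟩ := GreedyAux.conclusions hinv
  rw [hHeq, hsd]
  exact ⟨c1, c2, fun u hu => ⟨(c3 u hu).1, fun w hw => (c3 u hu).2 w hw⟩⟩
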